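/- arXiv:1006.3832 — 2 statements merged into one kernel-verified Lean document; each statement's English description precedes it below -/
import Mathlib

section
/- Let t > 0 be real and set q = e^{−t}. For x ∈ (0, t/2), define functions on ℤ by Ψ^{+,−}(x, v) = e^{−x} if v = 1, = −e^{−t/2} if v = 0, and = 0 otherwise; and Ψ^{−,+}(x, v) = 1 if v = 0, = −e^{−(t/2 − x)} if v = −1, and = 0 otherwise; and let Ψ(x, v) be the 2×2 matrix [[0, Ψ^{+,−}(x, v)], [Ψ^{−,+}(x, v), 0]]. Then for every x ∈ (0, t/2) and y ∈ ℝ, writing z = e^{−x + iy}, the (finitely supported) Fourier series satisfies Σ_{v ∈ ℤ} Ψ(x, v)·e^{ivy} = [[0, z − √q], [1 − √q/z, 0]], where √q = e^{−t/2}; i.e., the SYZ mirror transformation of Ψ equals the matrix factorization M₀ of W(z) = z + q/z with M₀² = (W(z) − W(√q))·Id₂. -/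
open scoped BigOperators

/-- `Ψ^{+,−}(x, v)` for the `ℙ¹` mirror: `e^{−x}` if `v = 1`, `−e^{−t/2}` if `v = 0`,
and `0` otherwise. -/
noncomputable def PsiPM (t x : ℝ) (v : ℤ) : ℂ :=
  if v = 1 then Real.exp (-x) else if v = 0 then -Real.exp (-(t / 2)) else 0

/-- `Ψ^{−,+}(x, v)` for the `ℙ¹` mirror: `1` if `v = 0`, `−e^{−(t/2 − x)}` if `v = −1`,
and `0` otherwise. -/
noncomputable def PsiMP (t x : ℝ) (v : ℤ) : ℂ :=
  if v = 0 then 1 else if v = -1 then -Real.exp (-(t / 2 - x)) else 0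

/-- The matrix-valued function `Ψ(x, v) = [[0, Ψ^{+,−}(x, v)], [Ψ^{−,+}(x, v), 0]]`. -/
noncomputable def PsiP1 (t x : ℝ) (v : ℤ) : Matrix (Fin 2) (Fin 2) ℂ :=
  !![0, PsiPM t x v; PsiMP t x v, 0]

/-- For `t > 0`, `q = e^{−t}`, `x ∈ (0, t/2)` and `y ∈ ℝ`, with
`z = e^{−x + iy}`, the fiberwise Fourier series (SYZ mirror transformation) of `Ψ`
equals `M₀ = [[0, z − √q], [1 − √q/z, 0]]` (where `√q = e^{−t/2}`), and `M₀` is a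
matrix factorization of `W(z) = z + q/z` with `M₀² = (W(z) − W(√q))·Id₂`. -/
theorem SYZ_transform_P1 (t : ℝ) (ht : 0 < t) (x : ℝ) (hx : x ∈ Set.Ioo 0 (t / 2))
    (y : ℝ) :
    letI z : ℂ := Complex.exp (-x + y * Complex.I)
    letI sq : ℂ := Real.exp (-(t / 2))
    letI q : ℂ := Real.exp (-t)
    letI M₀ : Matrix (Fin 2) (Fin 2) ℂ := !![0, z - sq; 1 - sq / z, 0]
    (∑ᶠ v : ℤ, Complex.exp (v * y * Complex.I) • PsiP1 t x v) = M₀ ∧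
      M₀ ^ 2 = ((z + q / z) - (sq + q / sq)) • (1 : Matrix (Fin 2) (Fin 2) ℂ) := by
  set z : ℂ := Complex.exp (-x + y * Complex.I) with hzdef
  set sq : ℂ := ((Real.exp (-(t / 2)) : ℝ) : ℂ) with hsqdef
  set q : ℂ := ((Real.exp (-t) : ℝ) : ℂ) with hqdef
  set M₀ : Matrix (Fin 2) (Fin 2) ℂ := !![0, z - sq; 1 - sq / z, 0] with hMdef
  have hz : z ≠ 0 := Complex.exp_ne_zero _
  have hsq : sq ≠ 0 := by
    rw [hsqdef]
    exact_mod_cast Real.exp_ne_zero _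
  have hq : q = sq * sq := by
    rw [hqdef, hsqdef, ← Complex.ofReal_mul, ← Real.exp_add]
    congr 2
    ring
  constructor
  · have hsupp : (Function.support fun v : ℤ =>
        Complex.exp (v * y * Complex.I) • PsiP1 t x v) ⊆ ({-1, 0, 1} : Finset ℤ) := by
      intro v hv
      simp only [Function.mem_support] at hv
      by_contra hmem
      simp only [Finset.coe_insert, Set.mem_insert_iff, Finset.coe_singleton,
        Set.mem_singleton_iff] at hmem
      push_neg at hmem
      obtain ⟨h1, h2, h3⟩ := hmem
      apply hv
      have hPM : PsiPM t x v = 0 := by simp [PsiPM, h3, h2]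
      have hMP : PsiMP t x v = 0 := by simp [PsiMP, h2, h1]
      simp only [PsiP1, hPM, hMP]
      ext i j
      fin_cases i <;> fin_cases j <;> simp
    rw [finsum_eq_sum _ (Set.Finite.subset ({-1, 0, 1} : Finset ℤ).finite_toSet hsupp)]
    rw [Finset.sum_subset (Set.Finite.toFinset_subset.mpr hsupp)]
    · have h1 : Complex.exp ((((1:ℤ):ℂ)) * y * Complex.I) * (Real.exp (-x) : ℝ) = z := by
        rw [hzdef, Complex.ofReal_exp, ← Complex.exp_add]
        congr 1
        push_cast
        ring
      have h2 : Complex.exp ((((-1:ℤ):ℂ)) * y * Complex.I) * (Real.exp (-(t/2 - x)) : ℝ)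
          = sq / z := by
        rw [hsqdef, hzdef, Complex.ofReal_exp, Complex.ofReal_exp, ← Complex.exp_sub,
          ← Complex.exp_add]
        congr 1
        push_cast
        ring
      have e1 : PsiPM t x (-1) = 0 := by norm_num [PsiPM]
      have e2 : PsiPM t x 0 = -(Real.exp (-(t/2)) : ℝ) := by norm_num [PsiPM]
      have e3 : PsiPM t x 1 = (Real.exp (-x) : ℝ) := by norm_num [PsiPM]
      have e4 : PsiMP t x (-1) = -(Real.exp (-(t/2 - x)) : ℝ) := by norm_num [PsiMP]
      have e5 : PsiMP t x 0 = 1 := by norm_num [PsiMP]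
      have e6 : PsiMP t x 1 = 0 := by norm_num [PsiMP]
      show ∑ v ∈ ({-1, 0, 1} : Finset ℤ), Complex.exp (v * y * Complex.I) • PsiP1 t x v = M₀
      rw [show ({-1, 0, 1} : Finset ℤ) = {-1} ∪ {0} ∪ {1} by decide]
      rw [Finset.sum_union (by decide), Finset.sum_union (by decide)]
      simp only [Finset.sum_singleton]
      ext i j
      fin_cases i <;> fin_cases j <;>
        simp only [Matrix.add_apply, Matrix.smul_apply, PsiP1, hMdef, e1, e2, e3, e4, e5, e6,
          Matrix.cons_val', Matrix.cons_val_zero, Matrix.cons_val_one, Matrix.head_cons,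
          Matrix.head_fin_const, Matrix.empty_val', Matrix.cons_val_fin_one, Matrix.of_apply,
          smul_eq_mul, Fin.isValue, mul_zero, add_zero, zero_add, mul_one, mul_neg,
          Fin.mk_zero, Fin.mk_one, Matrix.cons_val_zero, Matrix.cons_val_one, Matrix.head_cons,
          Fin.zero_eta, Fin.mk_one,
          Int.cast_zero, zero_mul, Complex.exp_zero, one_mul]
      · linear_combination h1 + hsqdef
      · linear_combination -h2
    · intro v _ hv
      rw [Set.Finite.mem_toFinset, Function.mem_support, not_not] at hv
      exact hv
  · have key : (z - sq) * (1 - sq / z) = (z + q / z) - (sq + q / sq) := by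
      field_simp
      rw [hq]; ring
    ext i j
    fin_cases i <;> fin_cases j <;>
      simp [hMdef, pow_two, Matrix.mul_apply, Fin.sum_univ_two, Matrix.one_apply, Matrix.smul_apply]
    all_goals linear_combination key
end

section
/- Let c ∈ ℂ, q = c³, and z₁, z₂ ∈ ℂ \ {0}. Define the 2×2 matrices F = [[z₁ − c, z₂ − c²/z₁], [−(1 − c/z₂), 1 − c/z₁]] and G = [[1 − c/z₁, −(z₂ − c²/z₁)], [1 − c/z₂, z₁ − c]]. Then F·G = (z₁ + z₂ + q/(z₁z₂) − 3c)·Id₂ and G·F = (z₁ + z₂ + q/(z₁z₂) − 3c)·Id₂. -/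
/-- For `c, z₁, z₂ : ℂ` with `z₁, z₂ ≠ 0` and `q = c³`, the 2×2 blocks
`F = [[z₁ − c, z₂ − c²/z₁], [−(1 − c/z₂), 1 − c/z₁]]` and
`G = [[1 − c/z₁, −(z₂ − c²/z₁)], [1 − c/z₂, z₁ − c]]` satisfy
`F·G = G·F = (z₁ + z₂ + q/(z₁z₂) − 3c)·Id₂`. -/
theorem block_factorization_P2 (c : ℂ) (z₁ z₂ : ℂ) (hz₁ : z₁ ≠ 0) (hz₂ : z₂ ≠ 0) :
    letI q : ℂ := c ^ 3
    letI F : Matrix (Fin 2) (Fin 2) ℂ :=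
      !![z₁ - c, z₂ - c ^ 2 / z₁; -(1 - c / z₂), 1 - c / z₁]
    letI G : Matrix (Fin 2) (Fin 2) ℂ :=
      !![1 - c / z₁, -(z₂ - c ^ 2 / z₁); 1 - c / z₂, z₁ - c]
    F * G = (z₁ + z₂ + q / (z₁ * z₂) - 3 * c) • (1 : Matrix (Fin 2) (Fin 2) ℂ) ∧
    G * F = (z₁ + z₂ + q / (z₁ * z₂) - 3 * c) • (1 : Matrix (Fin 2) (Fin 2) ℂ) := by
  constructor <;>
  · ext i j
    fin_cases i <;> fin_cases j <;>
      simp [Matrix.mul_apply, Fin.sum_univ_succ, Matrix.one_apply] <;>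
      field_simp <;> ring
end
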